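/- Let A be a real unital Banach algebra, let ω₁ : ℝ × ℝ → A be C¹, and let g : ℝ × ℝ → A be C² with g(x,0) = 1, every g(x,t) invertible, and ∂_t g(x,t) = −ω₁(x,t)·g(x,t) for all (x,t). Then for every x: g(x,1)⁻¹ · ∂_x g(x,1) = − ∫₀¹ g(x,t)⁻¹ · ∂_x ω₁(x,t) · g(x,t) dt. -/

import Mathlib

open intervalIntegral in
/-- Integrated form of the key identity: under the same hypotheses,
`g(x,1)⁻¹ · ∂_x g(x,1) = - ∫₀¹ g(x,t)⁻¹ · ∂_x ω₁(x,t) · g(x,t) dt`. -/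
theorem inv_deriv_x_eq_neg_integral
    {A : Type*} [NormedRing A] [NormedAlgebra ℝ A] [CompleteSpace A]
    (ω₁ g : ℝ × ℝ → A)
    (hω₁ : ContDiff ℝ 1 ω₁) (hg : ContDiff ℝ 2 g)
    (hg0 : ∀ x : ℝ, g (x, 0) = 1)
    (hgu : ∀ p : ℝ × ℝ, IsUnit (g p))
    (hgt : ∀ x t : ℝ, deriv (fun s => g (x, s)) t = -(ω₁ (x, t)) * g (x, t)) :
    ∀ x : ℝ,
      Ring.inverse (g (x, 1)) * deriv (fun u => g (u, 1)) x
        = -∫ t in (0:ℝ)..1,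
            Ring.inverse (g (x, t)) * deriv (fun u => ω₁ (u, t)) x * g (x, t) := by
  intro x
  have hgdiff : Differentiable ℝ g := hg.differentiable (by norm_num)
  have hωdiff : Differentiable ℝ ω₁ := hω₁.differentiable (by norm_num)
  have hf2 : ContDiff ℝ 1 (fderiv ℝ g) := hg.fderiv_right (m := 1) (by norm_num)
  have hf2diff : Differentiable ℝ (fderiv ℝ g) := hf2.differentiable (by norm_num)
  -- horizontal and vertical lines
  have hline : ∀ t u : ℝ, HasDerivAt (fun v : ℝ => ((v, t) : ℝ × ℝ)) (1, 0) u := fun t u =>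
    (hasDerivAt_id u).prodMk (hasDerivAt_const u t)
  have vline : ∀ t : ℝ, HasDerivAt (fun s : ℝ => ((x, s) : ℝ × ℝ)) (0, 1) t := fun t =>
    (hasDerivAt_const t x).prodMk (hasDerivAt_id t)
  -- partial derivatives of g
  have hDx : ∀ t, HasDerivAt (fun u => g (u, t)) (fderiv ℝ g (x, t) (1, 0)) x := fun t =>
    (hgdiff (x, t)).hasFDerivAt.comp_hasDerivAt x (hline t x)
  have hDt : ∀ (u t : ℝ), HasDerivAt (fun s => g (u, s)) (fderiv ℝ g (u, t) (0, 1)) t :=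
    fun u t => (hgdiff (u, t)).hasFDerivAt.comp_hasDerivAt t
      ((hasDerivAt_const t u).prodMk (hasDerivAt_id t))
  have hf2val : ∀ u t : ℝ, fderiv ℝ g (u, t) (0, 1) = -(ω₁ (u, t)) * g (u, t) := fun u t =>
    ((hDt u t).deriv).symm.trans (hgt u t)
  -- partial derivative of ω₁ in x
  have hWfd : ∀ t, HasDerivAt (fun u => ω₁ (u, t)) (fderiv ℝ ω₁ (x, t) (1, 0)) x := fun t =>
    (hωdiff (x, t)).hasFDerivAt.comp_hasDerivAt x (hline t x)
  have hWx : ∀ t, HasDerivAt (fun u => ω₁ (u, t)) (deriv (fun u => ω₁ (u, t)) x) x := fun t => by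
    rw [(hWfd t).deriv]; exact hWfd t
  -- derivative of t ↦ ∂ₓ g (x,t)
  have hDx' : ∀ t, HasDerivAt (fun s => fderiv ℝ g (x, s) (1, 0))
      (-(deriv (fun u => ω₁ (u, t)) x) * g (x, t) + -(ω₁ (x, t)) * fderiv ℝ g (x, t) (1, 0)) t := by
    intro t
    set f'' := fderiv ℝ (fderiv ℝ g) (x, t) with hf''
    have hsym : f'' (0, 1) (1, 0) = f'' (1, 0) (0, 1) :=
      second_derivative_symmetric (fun y => (hgdiff y).hasFDerivAt)
        (hf2diff (x, t)).hasFDerivAt _ _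
    have h1 : HasDerivAt (fun s => fderiv ℝ g (x, s)) (f'' (0, 1)) t :=
      (hf2diff (x, t)).hasFDerivAt.comp_hasDerivAt t (vline t)
    have h2 : HasDerivAt (fun s => fderiv ℝ g (x, s) (1, 0)) (f'' (0, 1) (1, 0)) t :=
      (ContinuousLinearMap.apply ℝ A ((1 : ℝ), (0 : ℝ))).hasFDerivAt.comp_hasDerivAt t h1
    -- compute f'' (1,0) (0,1) via the other order
    have h3 : HasDerivAt (fun u => fderiv ℝ g (u, t)) (f'' (1, 0)) x :=
      (hf2diff (x, t)).hasFDerivAt.comp_hasDerivAt x (hline t x)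
    have h4 : HasDerivAt (fun u => fderiv ℝ g (u, t) (0, 1)) (f'' (1, 0) (0, 1)) x :=
      (ContinuousLinearMap.apply ℝ A ((0 : ℝ), (1 : ℝ))).hasFDerivAt.comp_hasDerivAt x h3
    have h5 : HasDerivAt (fun u => -(ω₁ (u, t)) * g (u, t)) (f'' (1, 0) (0, 1)) x := by
      have : (fun u => fderiv ℝ g (u, t) (0, 1)) = fun u => -(ω₁ (u, t)) * g (u, t) :=
        funext fun u => hf2val u t
      rwa [this] at h4
    have h6 : HasDerivAt (fun u => -(ω₁ (u, t)) * g (u, t))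
        (-(deriv (fun u => ω₁ (u, t)) x) * g (x, t) + -(ω₁ (x, t)) * fderiv ℝ g (x, t) (1, 0)) x :=
      (hWx t).neg.mul (hDx t)
    have := h5.unique h6
    rw [← this, ← hsym]
    exact h2
  -- derivative of t ↦ (g (x,t))⁻¹
  have hGinv : ∀ t, HasDerivAt (fun s => Ring.inverse (g (x, s)))
      (Ring.inverse (g (x, t)) * ω₁ (x, t)) t := by
    intro t
    have hu := hgu (x, t)
    have h1 : HasDerivAt (fun s => g (x, s)) (-(ω₁ (x, t)) * g (x, t)) t := by
      have := hDt x t; rwa [hf2val x t] at this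
    have h2 : HasFDerivAt Ring.inverse
        (-ContinuousLinearMap.mulLeftRight ℝ A ↑hu.unit⁻¹ ↑hu.unit⁻¹) (g (x, t)) := by
      have := hasFDerivAt_ringInverse (𝕜 := ℝ) hu.unit
      rwa [hu.unit_spec] at this
    have h3 : HasDerivAt (fun s => Ring.inverse (g (x, s)))
        ((-ContinuousLinearMap.mulLeftRight ℝ A ↑hu.unit⁻¹ ↑hu.unit⁻¹)
          (-(ω₁ (x, t)) * g (x, t))) t := by exact h2.comp_hasDerivAt t h1
    have hinv : Ring.inverse (g (x, t)) = (↑hu.unit⁻¹ : A) := by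
      have h := Ring.inverse_unit hu.unit
      rwa [hu.unit_spec] at h
    have hgi : g (x, t) * Ring.inverse (g (x, t)) = 1 := Ring.mul_inverse_cancel _ hu
    convert h3 using 1
    simp only [ContinuousLinearMap.neg_apply, ContinuousLinearMap.mulLeftRight_apply, ← hinv,
      neg_mul, mul_neg, neg_neg]
    rw [mul_assoc, mul_assoc, hgi, mul_one]
  -- the function F and its derivative
  set F : ℝ → A := fun t => Ring.inverse (g (x, t)) * fderiv ℝ g (x, t) (1, 0) with hF
  have hF' : ∀ t, HasDerivAt F
      (-(Ring.inverse (g (x, t)) * deriv (fun u => ω₁ (u, t)) x * g (x, t))) t := by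
    intro t
    have h := (hGinv t).mul (hDx' t)
    convert h using 1
    · rfl
    have hig : Ring.inverse (g (x, t)) * g (x, t) = 1 := Ring.inverse_mul_cancel _ (hgu _)
    set c := Ring.inverse (g (x, t))
    set w := ω₁ (x, t)
    set wx := deriv (fun u => ω₁ (u, t)) x
    set G := g (x, t)
    set d := fderiv ℝ g (x, t) (1, 0)
    noncomm_ring
  -- value at 0
  have hF0 : F 0 = 0 := by
    have : fderiv ℝ g (x, 0) (1, 0) = 0 := by
      have h := (hDx 0).deriv
      have he : (fun u => g (u, 0)) = fun _ : ℝ => (1 : A) := funext fun u => hg0 u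
      rw [← h, he, deriv_const]
    simp [hF, this]
  -- continuity of the integrand
  have hWcont : Continuous fun t => deriv (fun u => ω₁ (u, t)) x := by
    have heq : (fun t => deriv (fun u => ω₁ (u, t)) x)
        = fun t => fderiv ℝ ω₁ (x, t) (1, 0) := by
      funext t
      exact (hWfd t).deriv
    rw [heq]
    exact ((hω₁.continuous_fderiv (by norm_num)).comp
      (continuous_const.prodMk continuous_id)).clm_apply continuous_const
  have hGinvcont : Continuous fun t => Ring.inverse (g (x, t)) := by
    have : Differentiable ℝ fun t => Ring.inverse (g (x, t)) :=
      fun t => (hGinv t).differentiableAt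
    exact this.continuous
  have hGcont : Continuous fun t => g (x, t) :=
    hg.continuous.comp (continuous_const.prodMk continuous_id)
  have hint : IntervalIntegrable
      (fun t => Ring.inverse (g (x, t)) * deriv (fun u => ω₁ (u, t)) x * g (x, t))
      MeasureTheory.volume 0 1 :=
    ((hGinvcont.mul hWcont).mul hGcont).intervalIntegrable 0 1
  have key := intervalIntegral.integral_eq_sub_of_hasDerivAt
      (f := F)
      (f' := fun t => -(Ring.inverse (g (x, t)) * deriv (fun u => ω₁ (u, t)) x * g (x, t)))
      (fun t _ => hF' t) hint.neg
  rw [intervalIntegral.integral_neg, hF0, sub_zero] at key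
  have hderiv1 : deriv (fun u => g (u, 1)) x = fderiv ℝ g (x, 1) (1, 0) := (hDx 1).deriv
  rw [hderiv1]
  exact key.symm
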